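/- Let f₁,…,fₙ : ℝ^d → ℝ be differentiable, convex and L-smooth (L > 0), let f = (1/n)·Σᵢ₌₁ⁿ fᵢ, and fix points x, w ∈ ℝ^d. Let 1 ≤ K ≤ d and let S₁,…,Sₙ be independent uniformly distributed random K-element subsets of Fin d; for each i let Qᵢ apply the RandK compressor with subset Sᵢ to a vector, i.e. (Qᵢ(v))_t = (d/K)·v_t if t ∈ Sᵢ and 0 otherwise. Then E[‖(1/n)·Σᵢ₌₁ⁿ Qᵢ(∇fᵢ(x) − ∇fᵢ(w)) + ∇f(w) − ∇f(x)‖²] ≤ 2L·(d/(nK) + 1)·(f(w) − f(x) − ⟨∇f(x), w − x⟩). In particular, the efficient Lipschitz constant of DHPL-Katyusha with RandK compression is at most (d/(nK) + 1)·L. -/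

import Mathlib

open MeasureTheory ProbabilityTheory
open scoped RealInnerProductSpace ENNReal

/-- Discrete σ-algebra on finsets, used to speak of a random subset. -/
instance finsetMeasurableSpace (α : Type*) : MeasurableSpace (Finset α) := ⊤

/-- The RandK compression operator with coordinate set `S`: it keeps the coordinates in `S`
rescaled by `d/K` and zeros out the others. -/
noncomputable def randKvec {d : ℕ} (K : ℕ) (S : Finset (Fin d))
    (x : EuclideanSpace ℝ (Fin d)) : EuclideanSpace ℝ (Fin d) :=
  WithLp.toLp 2 (fun t => if t ∈ S then ((d : ℝ) / (K : ℝ)) * x t else 0)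

instance finsetMeasurableSingleton (α : Type*) : MeasurableSingletonClass (Finset α) :=
  ⟨fun _ => MeasurableSpace.measurableSet_top⟩

lemma euclid_sum_apply {d : ℕ} {ι : Type*} (s : Finset ι)
    (v : ι → EuclideanSpace ℝ (Fin d)) (t : Fin d) :
    (∑ i ∈ s, v i) t = ∑ i ∈ s, v i t := by
  induction s using Finset.cons_induction with
  | empty => rfl
  | cons i s hi ih => rw [Finset.sum_cons, Finset.sum_cons, ← ih]; rfl


lemma convex_first_order {d : ℕ} {f : EuclideanSpace ℝ (Fin d) → ℝ}
    (hdiff : Differentiable ℝ f) (hconv : ConvexOn ℝ Set.univ f)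
    (u v : EuclideanSpace ℝ (Fin d)) :
    f u + ⟪gradient f u, v - u⟫ ≤ f v := by
  have hD : HasFDerivAt f ((InnerProductSpace.toDual ℝ _) (gradient f u)) u :=
    hasGradientAt_iff_hasFDerivAt.mp (hdiff u).hasGradientAt
  set φ : ℝ → ℝ := fun s => f (u + s • (v - u)) with hφ
  have hγ : HasDerivAt (fun s : ℝ => u + s • (v - u)) (v - u) (0:ℝ) := by
    simpa using ((hasDerivAt_id (0:ℝ)).smul_const (v - u)).const_add u
  have hder : HasDerivAt φ ⟪gradient f u, v - u⟫ 0 := by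
    have h0 : u + (0 : ℝ) • (v - u) = u := by simp
    have hD' : HasFDerivAt f ((InnerProductSpace.toDual ℝ _) (gradient f u))
        (u + (0:ℝ) • (v - u)) := by rw [h0]; exact hD
    have := hD'.comp_hasDerivAt (0:ℝ) hγ
    rw [InnerProductSpace.toDual_apply_apply] at this; exact this
  have hφconv : ConvexOn ℝ Set.univ φ := by
    have := hconv.comp_affineMap
      (AffineMap.lineMap u v : ℝ →ᵃ[ℝ] EuclideanSpace ℝ (Fin d))
    have heq : φ = f ∘ (AffineMap.lineMap u v : ℝ →ᵃ[ℝ] EuclideanSpace ℝ (Fin d)) := by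
      funext s
      simp [hφ, AffineMap.lineMap_apply]
      congr 1
      module
    rw [heq]
    simpa using this
  have hslope := hφconv.le_slope_of_hasDerivAt (Set.mem_univ 0) (Set.mem_univ 1)
    zero_lt_one hder
  have : slope φ 0 1 = f v - f u := by
    simp [slope_def_field, hφ]
  rw [this] at hslope
  linarith

lemma grad_norm_sq_le {d : ℕ} {f : EuclideanSpace ℝ (Fin d) → ℝ} {L : ℝ} (hL : 0 < L)
    (hdiff : Differentiable ℝ f) (hconv : ConvexOn ℝ Set.univ f)
    (hsmooth : ∀ u v : EuclideanSpace ℝ (Fin d),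
      f v ≤ f u + ⟪gradient f u, v - u⟫ + L / 2 * ‖v - u‖ ^ 2)
    (x w : EuclideanSpace ℝ (Fin d)) :
    ‖gradient f x - gradient f w‖ ^ 2 ≤ 2 * L * (f w - f x - ⟪gradient f x, w - x⟫) := by
  set h : EuclideanSpace ℝ (Fin d) := gradient f w - gradient f x with hh
  set z : EuclideanSpace ℝ (Fin d) := w - L⁻¹ • h with hz
  have h1 := hsmooth w z
  have h2 := convex_first_order hdiff hconv x z
  have hzw : z - w = -(L⁻¹ • h) := by rw [hz]; abel
  have hzx : z - x = (w - x) - L⁻¹ • h := by rw [hz]; abel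
  have e1 : ⟪gradient f w, z - w⟫ = -(L⁻¹ * ⟪gradient f w, h⟫) := by
    rw [hzw]; rw [inner_neg_right, real_inner_smul_right]
  have e2 : ‖z - w‖ ^ 2 = L⁻¹ ^ 2 * ‖h‖ ^ 2 := by
    rw [hzw, norm_neg, norm_smul, Real.norm_eq_abs, abs_inv, abs_of_pos hL, mul_pow]
  have e3 : ⟪gradient f x, z - x⟫ = ⟪gradient f x, w - x⟫ - L⁻¹ * ⟪gradient f x, h⟫ := by
    rw [hzx, inner_sub_right, real_inner_smul_right]
  have e4 : ⟪gradient f w, h⟫ - ⟪gradient f x, h⟫ = ‖h‖ ^ 2 := by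
    rw [← inner_sub_left, ← hh, real_inner_self_eq_norm_sq]
  have hnorm : ‖gradient f x - gradient f w‖ = ‖h‖ := by rw [hh, norm_sub_rev]
  rw [hnorm]
  rw [e1, e2] at h1
  rw [e3] at h2
  have hL' : L ≠ 0 := ne_of_gt hL
  have e5 : L⁻¹ * ⟪gradient f w, h⟫ - L⁻¹ * ⟪gradient f x, h⟫ = L⁻¹ * ‖h‖^2 := by
    rw [← mul_sub, e4]
  have key : L⁻¹ * ‖h‖^2 - L/2 * (L⁻¹^2 * ‖h‖^2) ≤ f w - f x - ⟪gradient f x, w - x⟫ := by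
    linarith [h1, h2, e5]
  have : L⁻¹ * ‖h‖^2 - L/2 * (L⁻¹^2 * ‖h‖^2) = ‖h‖^2 / (2*L) := by
    field_simp; ring
  rw [this] at key
  rw [div_le_iff₀ (by positivity)] at key
  linarith

lemma hasGradientAt_avg {d n : ℕ} (f : Fin n → EuclideanSpace ℝ (Fin d) → ℝ)
    (hdiff : ∀ i, Differentiable ℝ (f i)) (u : EuclideanSpace ℝ (Fin d)) :
    HasGradientAt (fun v => (1 / (n:ℝ)) * ∑ i, f i v)
      ((1 / (n:ℝ)) • ∑ i, gradient (f i) u) u := by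
  rw [hasGradientAt_iff_hasFDerivAt]
  have h1 : ∀ i, HasFDerivAt (f i)
      ((InnerProductSpace.toDual ℝ _) (gradient (f i) u)) u :=
    fun i => hasGradientAt_iff_hasFDerivAt.mp ((hdiff i) u).hasGradientAt
  have h2 : HasFDerivAt (fun v => ∑ i, f i v)
      (∑ i, (InnerProductSpace.toDual ℝ _) (gradient (f i) u)) u :=
    HasFDerivAt.fun_sum (fun i _ => h1 i)
  have h3 := h2.const_mul (1 / (n:ℝ))
  convert h3 using 1
  · rfl
  simp [_root_.map_smul, map_sum]

lemma integrable_comp_pi {n d : ℕ} {Ω : Type*} [MeasureSpace Ω]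
    [IsProbabilityMeasure (ℙ : Measure Ω)]
    (S : Fin n → Ω → Finset (Fin d)) (hSmeas : ∀ i, Measurable (S i))
    (h : (Fin n → Finset (Fin d)) → ℝ) :
    Integrable (fun a => h (fun i => S i a)) ℙ := by
  have hV : Measurable (fun a => (fun i => S i a) : Ω → Fin n → Finset (Fin d)) :=
    measurable_pi_lambda _ hSmeas
  have hh : Measurable h := measurable_of_countable h
  refine ⟨(hh.comp hV).aestronglyMeasurable, ?_⟩
  refine HasFiniteIntegral.of_bounded (C := ∑ v : Fin n → Finset (Fin d), ‖h v‖) ?_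
  filter_upwards with a
  exact Finset.single_le_sum (f := fun v => ‖h v‖) (fun _ _ => norm_nonneg _)
    (Finset.mem_univ _)

lemma count_subsets {d K : ℕ} (hK : 1 ≤ K) (t : Fin d) :
    (Finset.univ.filter fun U : Finset (Fin d) => U.card = K ∧ t ∈ U).card
      = (d - 1).choose (K - 1) := by
  have key : (Finset.univ.filter fun U : Finset (Fin d) => U.card = K ∧ t ∈ U).card
      = ((Finset.univ.erase t).powersetCard (K - 1)).card := by
    apply Finset.card_bij' (fun U _ => U.erase t) (fun U _ => insert t U)
    · intro U hU
      simp only [Finset.mem_filter, Finset.mem_univ, true_and] at hU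
      exact Finset.insert_erase hU.2
    · intro U hU
      rw [Finset.mem_powersetCard] at hU
      have ht : t ∉ U := fun hmem => (Finset.mem_erase.mp (hU.1 hmem)).1 rfl
      exact Finset.erase_insert ht
    · intro U hU
      simp only [Finset.mem_filter, Finset.mem_univ, true_and] at hU
      rw [Finset.mem_powersetCard]
      exact ⟨Finset.erase_subset_erase t (Finset.subset_univ U),
        by rw [Finset.card_erase_of_mem hU.2, hU.1]⟩
    · intro U hU
      rw [Finset.mem_powersetCard] at hU
      have ht : t ∉ U := fun hmem => (Finset.mem_erase.mp (hU.1 hmem)).1 rfl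
      simp only [Finset.mem_filter, Finset.mem_univ, true_and]
      refine ⟨?_, Finset.mem_insert_self t U⟩
      rw [Finset.card_insert_of_notMem ht, hU.2]
      omega
  rw [key, Finset.card_powersetCard]
  congr 1
  rw [Finset.card_erase_of_mem (Finset.mem_univ t), Finset.card_univ, Fintype.card_fin]

lemma expect_ind {d K : ℕ} (hK : 1 ≤ K) (hKd : K ≤ d) {Ω : Type*} [MeasureSpace Ω]
    [IsProbabilityMeasure (ℙ : Measure Ω)]
    (T : Ω → Finset (Fin d)) (hT : Measurable T) (hcard : ∀ a, (T a).card = K)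
    (hunif : ∀ U : Finset (Fin d), U.card = K → ℙ {a | T a = U} = ((d.choose K : ℝ≥0∞))⁻¹)
    (t : Fin d) (r : ℝ) :
    ∫ a, (if t ∈ T a then r else 0) ∂ℙ = ((K : ℝ) / (d : ℝ)) * r := by
  have hd : 0 < d := lt_of_lt_of_le hK hKd
  have hCpos : 0 < d.choose K := Nat.choose_pos hKd
  have hmap : ∫ a, (if t ∈ T a then r else 0) ∂ℙ
      = ∑ U : Finset (Fin d), (ℙ (T ⁻¹' {U})).toReal • (if t ∈ U then r else 0) := by
    have h1 : ∫ a, (if t ∈ T a then r else 0) ∂ℙ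
        = ∫ U, (if t ∈ U then r else 0) ∂(Measure.map T ℙ) := by
      rw [integral_map hT.aemeasurable measurable_from_top.aestronglyMeasurable]
    rw [h1, integral_fintype Integrable.of_finite]
    refine Finset.sum_congr rfl fun U _ => by
      rw [Measure.real, Measure.map_apply hT MeasurableSpace.measurableSet_top]
  have hprob : ∀ U : Finset (Fin d), (ℙ (T ⁻¹' {U})).toReal
      = if U.card = K then ((d.choose K : ℝ))⁻¹ else 0 := by
    intro U
    by_cases hU : U.card = K
    · have hpre : T ⁻¹' {U} = {a | T a = U} := rfl
      rw [hpre, hunif U hU, if_pos hU, ENNReal.toReal_inv, ENNReal.toReal_natCast]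
    · have hpre : T ⁻¹' {U} = ∅ := by
        ext a; simp only [Set.mem_preimage, Set.mem_singleton_iff, Set.mem_empty_iff_false,
          iff_false]
        intro hEq; exact hU (hEq ▸ hcard a)
      rw [hpre, measure_empty, if_neg hU]; rfl
  rw [hmap]
  have hterm : ∀ U : Finset (Fin d), (ℙ (T ⁻¹' {U})).toReal • (if t ∈ U then r else 0)
      = if U.card = K ∧ t ∈ U then ((d.choose K : ℝ))⁻¹ * r else 0 := by
    intro U
    rw [hprob U, smul_eq_mul]
    by_cases h1 : U.card = K <;> by_cases h2 : t ∈ U <;> simp [h1, h2]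
  simp_rw [hterm]
  rw [← Finset.sum_filter, Finset.sum_const, count_subsets hK t, nsmul_eq_mul]
  -- ((d-1).choose (K-1)) * ((d.choose K)⁻¹ * r) = K/d * r
  have hid : (d : ℝ) * ((d-1).choose (K-1) : ℝ) = (d.choose K : ℝ) * K := by
    have := Nat.add_one_mul_choose_eq (d-1) (K-1)
    have hd1 : d - 1 + 1 = d := by omega
    have hK1 : K - 1 + 1 = K := by omega
    rw [hd1, hK1] at this
    exact_mod_cast this
  have hC : (d.choose K : ℝ) ≠ 0 := Nat.cast_ne_zero.mpr hCpos.ne'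
  have hd' : (d : ℝ) ≠ 0 := Nat.cast_ne_zero.mpr hd.ne'
  field_simp
  linear_combination r * hid
lemma second_moment {n d K : ℕ} (hK : 1 ≤ K) (hKd : K ≤ d)
    {Ω : Type*} [MeasureSpace Ω] [IsProbabilityMeasure (ℙ : Measure Ω)]
    (S : Fin n → Ω → Finset (Fin d))
    (hSmeas : ∀ i, Measurable (S i))
    (hScard : ∀ i a, (S i a).card = K)
    (hSunif : ∀ i, ∀ T : Finset (Fin d), T.card = K →
      ℙ {a | S i a = T} = ((d.choose K : ℝ≥0∞))⁻¹)
    (hSindep : iIndepFun S ℙ)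
    (r : Fin n → ℝ) (t : Fin d) :
    ∫ a, (∑ i, (1/(n:ℝ)) * (if t ∈ S i a then ((d:ℝ)/(K:ℝ)) * r i else 0)
        - (1/(n:ℝ)) * ∑ i, r i)^2 ∂ℙ
      = (1/(n:ℝ))^2 * ∑ i, ((d:ℝ)/(K:ℝ) - 1) * (r i)^2 := by
  have hd0 : (d:ℝ) ≠ 0 := Nat.cast_ne_zero.mpr (by omega)
  have hK0 : (K:ℝ) ≠ 0 := Nat.cast_ne_zero.mpr (by omega)
  set X : Fin n → Ω → ℝ :=
    fun i a => if t ∈ S i a then ((d:ℝ)/(K:ℝ)) * r i else 0 with hX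
  set W : Fin n → Ω → ℝ := fun i a => (1/(n:ℝ)) * X i a with hW
  have hXmeas : ∀ i, Measurable (X i) := fun i =>
    (measurable_from_top (f := fun U : Finset (Fin d) =>
      if t ∈ U then ((d:ℝ)/(K:ℝ)) * r i else 0)).comp (hSmeas i)
  have hXbd : ∀ i a, ‖X i a‖ ≤ |((d:ℝ)/(K:ℝ)) * r i| := by
    intro i a
    simp only [hX, Real.norm_eq_abs]
    split_ifs <;> simp [abs_nonneg] <;> positivity
  have hXmem : ∀ i, MemLp (X i) 2 ℙ := fun i =>
    MemLp.of_bound (hXmeas i).aestronglyMeasurable _ (ae_of_all _ (hXbd i))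
  have hWmem : ∀ i, MemLp (W i) 2 ℙ := by
    intro i
    have : W i = (1/(n:ℝ)) • X i := rfl
    rw [this]
    exact (hXmem i).const_smul _
  have hEX : ∀ i, ∫ a, X i a ∂ℙ = r i := by
    intro i
    rw [hX]
    rw [expect_ind hK hKd (S i) (hSmeas i) (hScard i) (hSunif i) t]
    field_simp
  have hEX2 : ∀ i, ∫ a, (X i a)^2 ∂ℙ = ((d:ℝ)/(K:ℝ)) * (r i)^2 := by
    intro i
    have heq : ∀ a, (X i a)^2 = if t ∈ S i a then (((d:ℝ)/(K:ℝ)) * r i)^2 else 0 := by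
      intro a; simp only [hX]; split_ifs <;> simp
    simp_rw [heq]
    rw [expect_ind hK hKd (S i) (hSmeas i) (hScard i) (hSunif i) t]
    field_simp
  have hvarX : ∀ i, variance (X i) ℙ = ((d:ℝ)/(K:ℝ) - 1) * (r i)^2 := by
    intro i
    rw [variance_eq_sub (hXmem i)]
    have : ∫ a, ((X i) ^ 2) a ∂ℙ = ∫ a, (X i a)^2 ∂ℙ := rfl
    rw [this, hEX2 i, hEX i]
    ring
  have hvarW : ∀ i, variance (W i) ℙ = (1/(n:ℝ))^2 * (((d:ℝ)/(K:ℝ) - 1) * (r i)^2) := by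
    intro i
    have : W i = (1/(n:ℝ)) • X i := rfl
    rw [this, variance_smul, hvarX i]
  have hindep : Set.Pairwise ↑(Finset.univ : Finset (Fin n))
      (fun i j => IndepFun (W i) (W j) ℙ) := by
    intro i _ j _ hij
    have h1 : IndepFun (S i) (S j) ℙ := hSindep.indepFun hij
    exact h1.comp (measurable_from_top
        (f := fun U : Finset (Fin d) =>
          (1/(n:ℝ)) * if t ∈ U then ((d:ℝ)/(K:ℝ)) * r i else 0))
      (measurable_from_top
        (f := fun U : Finset (Fin d) =>
          (1/(n:ℝ)) * if t ∈ U then ((d:ℝ)/(K:ℝ)) * r j else 0))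
  set Y : Ω → ℝ := ∑ i, W i with hY
  have hYa : ∀ a, Y a = ∑ i, W i a := by
    intro a; rw [hY]; simp
  have hYmem : MemLp Y 2 ℙ := by
    have := memLp_finset_sum (Finset.univ : Finset (Fin n)) (f := W)
      (fun i _ => hWmem i)
    convert this using 1
    funext a; rw [hYa]
  have hvarY : variance Y ℙ = (1/(n:ℝ))^2 * ∑ i, ((d:ℝ)/(K:ℝ) - 1) * (r i)^2 := by
    rw [hY, IndepFun.variance_sum (fun i _ => hWmem i) hindep]
    rw [Finset.mul_sum]
    exact Finset.sum_congr rfl fun i _ => hvarW i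
  have hEY : ∫ a, Y a ∂ℙ = (1/(n:ℝ)) * ∑ i, r i := by
    simp_rw [hYa]
    rw [integral_finset_sum _ (fun i _ => ((hWmem i).integrable one_le_two))]
    rw [Finset.mul_sum]
    refine Finset.sum_congr rfl fun i _ => ?_
    rw [hW]
    simp only
    rw [MeasureTheory.integral_const_mul, hEX i]
  set m : ℝ := (1/(n:ℝ)) * ∑ i, r i with hm
  have hIY : Integrable Y ℙ := hYmem.integrable one_le_two
  have hIY2 : Integrable (fun a => (Y a)^2) ℙ := hYmem.integrable_sq
  have hexpand : ∫ a, (Y a - m)^2 ∂ℙ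
      = ∫ a, (Y a)^2 ∂ℙ - 2*m*(∫ a, Y a ∂ℙ) + m^2 := by
    have h1 : ∀ a, (Y a - m)^2 = (Y a)^2 - (2*m) * Y a + m^2 := by intro a; ring
    simp_rw [h1]
    have hI3 : Integrable (fun a => (Y a)^2 - (2*m) * Y a) ℙ :=
      hIY2.sub (hIY.const_mul (2*m))
    rw [integral_add hI3 (integrable_const _),
      integral_sub hIY2 (hIY.const_mul (2*m)),
      MeasureTheory.integral_const_mul, integral_const]
    simp
  have hY2 : ∫ a, (Y a)^2 ∂ℙ = variance Y ℙ + (∫ a, Y a ∂ℙ)^2 := by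
    rw [variance_eq_sub hYmem]
    have : ∫ a, ((Y) ^ 2) a ∂ℙ = ∫ a, (Y a)^2 ∂ℙ := rfl
    rw [this]; ring
  have hgoal : ∫ a, (Y a - m)^2 ∂ℙ = variance Y ℙ := by
    rw [hexpand, hY2, hEY]
    ring
  have hfin : ∫ a, (∑ i, (1/(n:ℝ)) * (if t ∈ S i a then ((d:ℝ)/(K:ℝ)) * r i else 0)
        - (1/(n:ℝ)) * ∑ i, r i)^2 ∂ℙ
      = ∫ a, (Y a - m)^2 ∂ℙ := by
    congr 1
    funext a
    rw [hYa a, hm]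
  rw [hfin, hgoal, hvarY]

theorem dhpl_katyusha_randK_efficient_lipschitz
    {d n K : ℕ} (hn : 0 < n) (hK : 1 ≤ K) (hKd : K ≤ d)
    {L : ℝ} (hL : 0 < L)
    (f : Fin n → EuclideanSpace ℝ (Fin d) → ℝ)
    (hdiff : ∀ i, Differentiable ℝ (f i))
    (hconv : ∀ i, ConvexOn ℝ Set.univ (f i))
    (hsmooth : ∀ i, ∀ u v : EuclideanSpace ℝ (Fin d),
      f i v ≤ f i u + ⟪gradient (f i) u, v - u⟫ + L / 2 * ‖v - u‖ ^ 2)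
    (F : EuclideanSpace ℝ (Fin d) → ℝ)
    (hF : F = fun u => (1 / (n : ℝ)) * ∑ i, f i u)
    (x w : EuclideanSpace ℝ (Fin d))
    {Ω : Type*} [MeasureSpace Ω] [IsProbabilityMeasure (ℙ : Measure Ω)]
    (S : Fin n → Ω → Finset (Fin d))
    (hSmeas : ∀ i, Measurable (S i))
    (hScard : ∀ i a, (S i a).card = K)
    (hSunif : ∀ i, ∀ T : Finset (Fin d), T.card = K →
      ℙ {a | S i a = T} = ((d.choose K : ℝ≥0∞))⁻¹)
    (hSindep : iIndepFun S ℙ) :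
    ∫ a, ‖(1 / (n : ℝ)) •
        ∑ i, randKvec K (S i a) (gradient (f i) x - gradient (f i) w)
        + gradient F w - gradient F x‖ ^ 2 ∂ℙ
      ≤ 2 * L * ((d : ℝ) / ((n : ℝ) * (K : ℝ)) + 1)
          * (F w - F x - ⟪gradient F x, w - x⟫) := by
  have hn0 : (n:ℝ) ≠ 0 := Nat.cast_ne_zero.mpr hn.ne'
  have hnpos : (0:ℝ) < n := Nat.cast_pos.mpr hn
  have hK0 : (0:ℝ) < K := Nat.cast_pos.mpr hK
  have hdKge : (1:ℝ) ≤ (d:ℝ)/(K:ℝ) := by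
    rw [le_div_iff₀ hK0]; simpa using (Nat.cast_le (α := ℝ)).mpr hKd
  set g : Fin n → EuclideanSpace ℝ (Fin d) :=
    fun i => gradient (f i) x - gradient (f i) w with hg
  have hgFx : gradient F x = (1/(n:ℝ)) • ∑ i, gradient (f i) x := by
    rw [hF]; exact (hasGradientAt_avg f hdiff x).gradient
  have hgFw : gradient F w = (1/(n:ℝ)) • ∑ i, gradient (f i) w := by
    rw [hF]; exact (hasGradientAt_avg f hdiff w).gradient
  -- coordinatewise rewriting of the norm
  have hinteg : ∀ a, ‖(1 / (n : ℝ)) •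
        ∑ i, randKvec K (S i a) (gradient (f i) x - gradient (f i) w)
        + gradient F w - gradient F x‖ ^ 2
      = ∑ t, (∑ i, (1/(n:ℝ)) * (if t ∈ S i a then ((d:ℝ)/(K:ℝ)) * (g i t) else 0)
          - (1/(n:ℝ)) * ∑ i, g i t)^2 := by
    intro a
    rw [PiLp.norm_sq_eq_of_L2]
    refine Finset.sum_congr rfl fun t _ => ?_
    rw [Real.norm_eq_abs, sq_abs]
    have hcoord : ((1 / (n : ℝ)) •
          ∑ i, randKvec K (S i a) (gradient (f i) x - gradient (f i) w)
          + gradient F w - gradient F x) t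
        = ∑ i, (1/(n:ℝ)) * (if t ∈ S i a then ((d:ℝ)/(K:ℝ)) * (g i t) else 0)
          - (1/(n:ℝ)) * ∑ i, g i t := by
      have h1 : ((1 / (n : ℝ)) •
          ∑ i, randKvec K (S i a) (gradient (f i) x - gradient (f i) w)
          + gradient F w - gradient F x) t
          = (1/(n:ℝ)) * (∑ i, randKvec K (S i a) (g i)) t
            + (gradient F w) t - (gradient F x) t := rfl
      have h2 : (∑ i, randKvec K (S i a) (g i)) t
          = ∑ i, (if t ∈ S i a then ((d:ℝ)/(K:ℝ)) * (g i t) else 0) := by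
        rw [euclid_sum_apply]
        exact Finset.sum_congr rfl fun i _ => by simp [randKvec]
      have h3 : (gradient F w) t = (1/(n:ℝ)) * ∑ i, (gradient (f i) w) t := by
        rw [hgFw]
        show (1/(n:ℝ)) * (∑ i, gradient (f i) w) t = _
        rw [euclid_sum_apply]
      have h4 : (gradient F x) t = (1/(n:ℝ)) * ∑ i, (gradient (f i) x) t := by
        rw [hgFx]
        show (1/(n:ℝ)) * (∑ i, gradient (f i) x) t = _
        rw [euclid_sum_apply]
      have h5 : ∀ i, g i t = (gradient (f i) x) t - (gradient (f i) w) t := fun i => rfl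
      rw [h1, h2, h3, h4, Finset.mul_sum]
      simp_rw [h5]
      rw [Finset.sum_sub_distrib, mul_sub, Finset.mul_sum, Finset.mul_sum]
      ring
    rw [hcoord]
  -- split the integral over coordinates
  have hsplit : ∫ a, ‖(1 / (n : ℝ)) •
        ∑ i, randKvec K (S i a) (gradient (f i) x - gradient (f i) w)
        + gradient F w - gradient F x‖ ^ 2 ∂ℙ
      = ∑ t, ∫ a, (∑ i, (1/(n:ℝ)) * (if t ∈ S i a then ((d:ℝ)/(K:ℝ)) * (g i t) else 0)
          - (1/(n:ℝ)) * ∑ i, g i t)^2 ∂ℙ := by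
    rw [integral_congr_ae (ae_of_all _ hinteg)]
    refine integral_finset_sum _ fun t _ => ?_
    exact integrable_comp_pi S hSmeas
      (fun v => (∑ i, (1/(n:ℝ)) * (if t ∈ v i then ((d:ℝ)/(K:ℝ)) * (g i t) else 0)
          - (1/(n:ℝ)) * ∑ i, g i t)^2)
  rw [hsplit]
  have hval : ∀ t, ∫ a, (∑ i, (1/(n:ℝ)) * (if t ∈ S i a then ((d:ℝ)/(K:ℝ)) * (g i t) else 0)
          - (1/(n:ℝ)) * ∑ i, g i t)^2 ∂ℙ
      = (1/(n:ℝ))^2 * ∑ i, ((d:ℝ)/(K:ℝ) - 1) * (g i t)^2 := fun t =>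
    second_moment hK hKd S hSmeas hScard hSunif hSindep (fun i => g i t) t
  simp_rw [hval]
  -- reorganize the double sum
  have hsum : ∑ t, (1/(n:ℝ))^2 * ∑ i, ((d:ℝ)/(K:ℝ) - 1) * (g i t)^2
      = (1/(n:ℝ))^2 * (((d:ℝ)/(K:ℝ) - 1) * ∑ i, ‖g i‖^2) := by
    rw [← Finset.mul_sum, Finset.sum_comm]
    congr 1
    rw [Finset.mul_sum]
    refine Finset.sum_congr rfl fun i _ => ?_
    rw [← Finset.mul_sum]
    congr 1
    rw [PiLp.norm_sq_eq_of_L2]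
    refine Finset.sum_congr rfl fun t _ => ?_
    rw [Real.norm_eq_abs, sq_abs]
  rw [hsum]
  -- bound using smoothness + convexity
  set D : Fin n → ℝ := fun i => f i w - f i x - ⟪gradient (f i) x, w - x⟫ with hD
  have hgb : ∀ i, ‖g i‖^2 ≤ 2*L*(D i) := fun i =>
    grad_norm_sq_le hL (hdiff i) (hconv i) (hsmooth i) x w
  have hDnn : ∀ i, 0 ≤ D i := by
    intro i
    have := convex_first_order (hdiff i) (hconv i) x w
    simp only [hD]
    linarith
  set Dt : ℝ := F w - F x - ⟪gradient F x, w - x⟫ with hDt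
  have hsumD : ∑ i, D i = n * Dt := by
    rw [hDt, hgFx, real_inner_smul_left, sum_inner, hF]
    simp only [hD]
    rw [Finset.sum_sub_distrib, Finset.sum_sub_distrib]
    field_simp
  have hDtnn : 0 ≤ Dt := by
    have h1 : 0 ≤ ∑ i, D i := Finset.sum_nonneg fun i _ => hDnn i
    rw [hsumD] at h1
    nlinarith
  have hstep1 : (1/(n:ℝ))^2 * (((d:ℝ)/(K:ℝ) - 1) * ∑ i, ‖g i‖^2)
      ≤ (1/(n:ℝ))^2 * (((d:ℝ)/(K:ℝ) - 1) * (2*L*(n*Dt))) := by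
    have hs : ∑ i, ‖g i‖^2 ≤ 2*L*(n*Dt) := by
      calc ∑ i, ‖g i‖^2 ≤ ∑ i, 2*L*(D i) := Finset.sum_le_sum fun i _ => hgb i
        _ = 2*L*(n*Dt) := by rw [← Finset.mul_sum, hsumD]
    have hc : 0 ≤ ((d:ℝ)/(K:ℝ) - 1) := by linarith
    have : ((d:ℝ)/(K:ℝ) - 1) * ∑ i, ‖g i‖^2 ≤ ((d:ℝ)/(K:ℝ) - 1) * (2*L*(n*Dt)) :=
      mul_le_mul_of_nonneg_left hs hc
    exact mul_le_mul_of_nonneg_left this (by positivity)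
  refine le_trans hstep1 ?_
  have heq : (1/(n:ℝ))^2 * (((d:ℝ)/(K:ℝ) - 1) * (2*L*(n*Dt)))
      = 2*L*(((d:ℝ)/(K:ℝ) - 1)/n) * Dt := by
    field_simp
  rw [heq]
  have hcoef : ((d:ℝ)/(K:ℝ) - 1)/n ≤ (d:ℝ)/((n:ℝ)*(K:ℝ)) + 1 := by
    have h1 : ((d:ℝ)/(K:ℝ) - 1)/n = (d:ℝ)/((n:ℝ)*(K:ℝ)) - 1/n := by
      field_simp
    have h2 : (0:ℝ) ≤ 1/n := by positivity
    linarith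
  have := mul_le_mul_of_nonneg_right
    (mul_le_mul_of_nonneg_left hcoef (by linarith : (0:ℝ) ≤ 2*L)) hDtnn
  calc 2*L*(((d:ℝ)/(K:ℝ) - 1)/n) * Dt
      ≤ 2*L*((d:ℝ)/((n:ℝ)*(K:ℝ)) + 1) * Dt := this
    _ = 2 * L * ((d : ℝ) / ((n : ℝ) * (K : ℝ)) + 1) * Dt := by ring
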